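/- Let X = AGL₂(3). Then every automorphism of X is inner, i.e., Aut(X) = Inn(X) ≅ X. -/

import Mathlib

abbrev GL23 := Matrix.GeneralLinearGroup (Fin 2) (ZMod 3)
abbrev V23 := Multiplicative (Fin 2 → ZMod 3)

def glAddAut (g : GL23) : (Fin 2 → ZMod 3) ≃+ (Fin 2 → ZMod 3) where
  toFun v := (g : Matrix (Fin 2) (Fin 2) (ZMod 3)).mulVec v
  invFun v := ((g⁻¹ : GL23) : Matrix (Fin 2) (Fin 2) (ZMod 3)).mulVec v
  left_inv v := by
    have hd : IsUnit ((g : Matrix (Fin 2) (Fin 2) (ZMod 3)).det) :=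
      (Matrix.isUnit_iff_isUnit_det _).mp g.isUnit
    simp [Matrix.mulVec_mulVec, Matrix.nonsing_inv_mul _ hd, -Matrix.mulVec_fin_two]
  right_inv v := by
    have hd : IsUnit ((g : Matrix (Fin 2) (Fin 2) (ZMod 3)).det) :=
      (Matrix.isUnit_iff_isUnit_det _).mp g.isUnit
    simp [Matrix.mulVec_mulVec, Matrix.mul_nonsing_inv _ hd, -Matrix.mulVec_fin_two]
  map_add' x y := Matrix.mulVec_add _ x y

def aglPhi : GL23 →* MulAut V23 where
  toFun g := AddEquiv.toMultiplicative (glAddAut g)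
  map_one' := by
    ext v
    simp [glAddAut, AddEquiv.toMultiplicative]
  map_mul' g h := by
    ext v
    simp [glAddAut, AddEquiv.toMultiplicative, Matrix.mulVec_mulVec, -Matrix.mulVec_fin_two]

/-- The affine group `AGL₂(3) = (F₃)² ⋊ GL₂(3)`. -/
def AGL23 := SemidirectProduct V23 GL23 aglPhi

instance : Group AGL23 := SemidirectProduct.instGroup


open SemidirectProduct Multiplicative

abbrev S := V23 ⋊[aglPhi] GL23

lemma aglPhi_apply (g : GL23) (v : V23) :
    aglPhi g v = ofAdd ((g : Matrix (Fin 2) (Fin 2) (ZMod 3)).mulVec v.toAdd) := rfl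

lemma aglPhi_neg_one (v : V23) : aglPhi (-1 : GL23) v = v⁻¹ := by
  rw [aglPhi_apply]; simp [Matrix.neg_mulVec]

lemma v23_cube (v : V23) : v * v * v = 1 := by
  have h : v.toAdd + v.toAdd + v.toAdd = 0 := by
    funext i
    exact (by decide : ∀ c : ZMod 3, c + c + c = 0) _
  rw [show v * v * v = ofAdd (v.toAdd + v.toAdd + v.toAdd) from rfl, h, ofAdd_zero]

-- matrix = 1 from mulVec
lemma matrix_eq_one (M : Matrix (Fin 2) (Fin 2) (ZMod 3))
    (h : ∀ x, M.mulVec x = x) : M = 1 := by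
  ext i j
  have := congrFun (h (Pi.single j 1)) i
  simpa [Matrix.one_apply, Pi.single_apply, eq_comm] using this
lemma coe_mkOfDetNeZero (A : Matrix (Fin 2) (Fin 2) (ZMod 3)) (h : A.det ≠ 0) :
    ((Matrix.GeneralLinearGroup.mkOfDetNeZero A h : GL23) : Matrix (Fin 2) (Fin 2) (ZMod 3)) = A := rfl

lemma eq_inl_of_commute {x : S} (h : ∀ v : V23, x * inl v = inl v * x) :
    x = inl x.left := by
  have hr : x.right = 1 := by
    have key : ∀ v : V23, aglPhi x.right v = v := by
      intro v
      have h1 := congrArg SemidirectProduct.left (h v)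
      simp only [mul_left, left_inl, right_inl, map_one, MulAut.one_apply] at h1
      -- h1 : x.left * aglPhi x.right v = v * x.left
      have := mul_left_cancel (a := x.left) (h1.trans (mul_comm v x.left))
      exact this
    apply Units.ext
    apply matrix_eq_one
    intro w
    have := key (ofAdd w)
    rw [aglPhi_apply] at this
    exact congrArg Multiplicative.toAdd this
  ext <;> simp [hr]

lemma exists_gl_single {u : Fin 2 → ZMod 3} (hu : u ≠ 0) :
    ∃ g : GL23, (g : Matrix (Fin 2) (Fin 2) (ZMod 3)).mulVec (Pi.single 0 1) = u := by
  by_cases h0 : u 0 ≠ 0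
  · refine ⟨Matrix.GeneralLinearGroup.mkOfDetNeZero !![u 0, 0; u 1, 1] ?_, ?_⟩
    · simp [Matrix.det_fin_two_of, h0]
    · funext i
      fin_cases i <;> simp [Matrix.mulVec_single] <;> rfl
  · push_neg at h0
    have h1 : u 1 ≠ 0 := by
      intro h1
      apply hu; funext i; fin_cases i <;> simp [h0, h1]
    refine ⟨Matrix.GeneralLinearGroup.mkOfDetNeZero !![0, 1; u 1, 0] ?_, ?_⟩
    · simp [Matrix.det_fin_two_of, h1]
    · funext i
      fin_cases i <;> simp [Matrix.mulVec_single, h0] <;> rfl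

lemma exists_gl_trans {u t : Fin 2 → ZMod 3} (hu : u ≠ 0) (ht : t ≠ 0) :
    ∃ g : GL23, (g : Matrix (Fin 2) (Fin 2) (ZMod 3)).mulVec u = t := by
  obtain ⟨a, ha⟩ := exists_gl_single hu
  obtain ⟨b, hb⟩ := exists_gl_single ht
  refine ⟨b * a⁻¹, ?_⟩
  have h1 : ((a⁻¹ : GL23) : Matrix (Fin 2) (Fin 2) (ZMod 3)).mulVec u = Pi.single 0 1 := by
    rw [← ha, Matrix.mulVec_mulVec]
    have : ((a⁻¹ : GL23) : Matrix (Fin 2) (Fin 2) (ZMod 3)) * a = 1 := by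
      rw [← Units.val_mul, inv_mul_cancel, Units.val_one]
    rw [this, Matrix.one_mulVec]
  rw [Units.val_mul, ← Matrix.mulVec_mulVec, h1, hb]
def Vsub : Subgroup S := (inl : V23 →* S).range

lemma Vsub_normal : Vsub.Normal := by
  rw [Vsub, range_inl_eq_ker_rightHom]; exact MonoidHom.normal_ker _

lemma mem_Vsub {x : S} : x ∈ Vsub ↔ x.right = 1 := by
  constructor
  · rintro ⟨v, rfl⟩; simp
  · intro h; exact ⟨x.left, by ext <;> simp [h]⟩

lemma eq_inl_of_mem {x : S} (hx : x ∈ Vsub) : x = inl x.left := by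
  ext <;> simp [mem_Vsub.mp hx]

lemma toAdd_ne (v : V23) (h : v ≠ 1) : v.toAdd ≠ 0 := by
  intro h0
  exact h (by rw [← ofAdd_toAdd v, h0, ofAdd_zero])

lemma normal_le_V (K : Subgroup S) (hK : K.Normal) (hle : K ≤ Vsub) :
    K = ⊥ ∨ K = Vsub := by
  by_cases hb : K = ⊥
  · exact Or.inl hb
  right
  rw [Subgroup.eq_bot_iff_forall] at hb
  push_neg at hb
  obtain ⟨x, hxK, hx1⟩ := hb
  have hxV := eq_inl_of_mem (hle hxK)
  set v := x.left with hv
  have hv1 : v ≠ 1 := by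
    intro h; apply hx1; rw [hxV, h, map_one]
  refine le_antisymm hle ?_
  rintro y ⟨w, rfl⟩
  by_cases hw : w = 1
  · rw [hw, map_one]; exact K.one_mem
  · obtain ⟨g, hg⟩ := exists_gl_trans (toAdd_ne v hv1) (toAdd_ne w hw)
    have hphi : aglPhi g v = w := by
      rw [aglPhi_apply, hg, ofAdd_toAdd]
    rw [← hphi, inl_aut]
    rw [hxV] at hxK
    rw [map_inv]
    exact hK.conj_mem _ hxK (inr g)
lemma le_map_V (f : MulAut S) : Vsub ≤ Vsub.map f.toMonoidHom := by
  set N := Vsub.map f.toMonoidHom with hNdef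
  have hN : N.Normal := Subgroup.Normal.map Vsub_normal f.toMonoidHom f.surjective
  have hKn : (N ⊓ Vsub).Normal := by
    constructor
    intro x hx g
    exact ⟨hN.conj_mem x hx.1 g, Vsub_normal.conj_mem x hx.2 g⟩
  rcases normal_le_V (N ⊓ Vsub) hKn inf_le_right with h | h
  · exfalso
    have hcomm := Subgroup.commute_of_normal_of_disjoint N Vsub hN Vsub_normal
      (disjoint_iff.mpr h)
    have hNle : N ≤ Vsub := by
      intro n hn
      have he := eq_inl_of_commute (x := n)
        (fun v => (hcomm n (inl v) hn ⟨v, rfl⟩).eq)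
      exact mem_Vsub.mpr (by rw [he]; simp)
    have hNbot : N = ⊥ := le_bot_iff.mp (h ▸ le_inf le_rfl hNle)
    have hv0 : (inl (Multiplicative.ofAdd (Pi.single 0 1 : Fin 2 → ZMod 3)) : S) ≠ 1 := by
      intro h1
      have := inl_injective (h1.trans (map_one inl).symm)
      have := congrFun (congrArg Multiplicative.toAdd this) 0
      simpa using this
    have hmem : f (inl (Multiplicative.ofAdd (Pi.single 0 1 : Fin 2 → ZMod 3))) ∈ N :=
      ⟨_, ⟨_, rfl⟩, rfl⟩
    rw [hNbot, Subgroup.mem_bot] at hmem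
    exact hv0 (by simpa using f.injective (hmem.trans (map_one f).symm))
  · exact h ▸ inf_le_left

lemma map_V (f : MulAut S) : Vsub.map f.toMonoidHom = Vsub := by
  refine le_antisymm ?_ (le_map_V f)
  have h2 := Subgroup.map_mono (f := f.toMonoidHom) (le_map_V f⁻¹)
  rw [Subgroup.map_map] at h2
  have hcomp : f.toMonoidHom.comp (f⁻¹ : MulAut S).toMonoidHom = MonoidHom.id S := by
    exact MonoidHom.ext fun x => MulAut.apply_inv_self S f x
  rwa [hcomp, Subgroup.map_id] at h2
lemma f_inl_mem (f : MulAut S) (v : V23) : f (inl v) ∈ Vsub := by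
  rw [← map_V f]; exact ⟨inl v, ⟨v, rfl⟩, rfl⟩

def Ahom (f : MulAut S) : (Fin 2 → ZMod 3) →+ (Fin 2 → ZMod 3) :=
  AddMonoidHom.mk' (fun x => Multiplicative.toAdd ((f (inl (Multiplicative.ofAdd x))).left))
    (by
      intro x y
      show Multiplicative.toAdd ((f (inl (Multiplicative.ofAdd (x + y)))).left) = _
      have h1 : (inl (Multiplicative.ofAdd (x + y)) : S)
          = inl (Multiplicative.ofAdd x) * inl (Multiplicative.ofAdd y) := by
        rw [← map_mul]; rfl
      rw [h1, map_mul, mul_left,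
        mem_Vsub.mp (f_inl_mem f (Multiplicative.ofAdd x)), map_one, MulAut.one_apply]
      rfl)

lemma inl_Ahom (f : MulAut S) (v : V23) :
    f (inl v) = inl (Multiplicative.ofAdd (Ahom f v.toAdd)) := by
  have h := eq_inl_of_mem (f_inl_mem f v)
  rw [h]; rfl

lemma Ahom_smul (f : MulAut S) (c : ZMod 3) (x : Fin 2 → ZMod 3) :
    Ahom f (c • x) = c • Ahom f x := by
  have h : c • x = c.val • x := by
    rw [← Nat.cast_smul_eq_nsmul (ZMod 3), ZMod.natCast_val, ZMod.cast_id]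
  have h2 : c • Ahom f x = c.val • Ahom f x := by
    rw [← Nat.cast_smul_eq_nsmul (ZMod 3), ZMod.natCast_val, ZMod.cast_id]
  rw [h, h2, AddMonoidHom.map_nsmul]

def fmat (f : MulAut S) : Matrix (Fin 2) (Fin 2) (ZMod 3) :=
  Matrix.of fun i j => Ahom f (Pi.single j 1) i

lemma fmat_mulVec (f : MulAut S) (x : Fin 2 → ZMod 3) :
    (fmat f).mulVec x = Ahom f x := by
  have hx : x = ∑ j, x j • (Pi.single j 1 : Fin 2 → ZMod 3) := by
    funext k
    simp [Pi.single_apply, Finset.sum_apply]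
  conv_rhs => rw [hx]
  rw [map_sum]
  funext i
  rw [Matrix.mulVec, dotProduct, Finset.sum_apply]
  refine Finset.sum_congr rfl fun j _ => ?_
  rw [Ahom_smul]
  simp [fmat, mul_comm]

lemma Ahom_inv (f : MulAut S) (x : Fin 2 → ZMod 3) : Ahom f (Ahom f⁻¹ x) = x := by
  have h1 := inl_Ahom f⁻¹ (Multiplicative.ofAdd x)
  have h2 := inl_Ahom f (Multiplicative.ofAdd (Ahom f⁻¹ x))
  have h3 : f (f⁻¹ (inl (Multiplicative.ofAdd x))) = inl (Multiplicative.ofAdd x) :=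
    MulAut.apply_inv_self S f _
  simp only [toAdd_ofAdd] at h1 h2
  rw [h1, h2] at h3
  have := inl_injective h3
  simpa using congrArg Multiplicative.toAdd this

lemma exists_g (f : MulAut S) : ∃ g : GL23, ∀ v : V23, f (inl v) = inl (aglPhi g v) := by
  have hMM' : fmat f * fmat f⁻¹ = 1 := matrix_eq_one _ (fun x => by
    rw [← Matrix.mulVec_mulVec, fmat_mulVec, fmat_mulVec, Ahom_inv])
  have hM'M : fmat f⁻¹ * fmat f = 1 := matrix_eq_one _ (fun x => by
    rw [← Matrix.mulVec_mulVec, fmat_mulVec, fmat_mulVec]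
    have := Ahom_inv f⁻¹ (x := x)
    rwa [inv_inv] at this)
  refine ⟨⟨fmat f, fmat f⁻¹, hMM', hM'M⟩, fun v => ?_⟩
  rw [inl_Ahom f v, aglPhi_apply]
  congr 1
  rw [fmat_mulVec]
lemma inr_mul_inl (g : GL23) (n : V23) :
    (inr g : S) * inl n = inl (aglPhi g n) * inr g := by
  rw [inl_aut, map_inv, inv_mul_cancel_right]

lemma conj_inr_inl (a : GL23) (n : V23) :
    (inr a : S) * inl n * (inr a)⁻¹ = inl (aglPhi a n) := by
  rw [inl_aut a n, map_inv]

lemma aglPhi_inv_apply (g : GL23) (v : V23) : aglPhi g⁻¹ (aglPhi g v) = v := by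
  rw [← MulAut.mul_apply, ← map_mul, inv_mul_cancel, map_one, MulAut.one_apply]

lemma conj_surj : Function.Surjective ⇑(MulAut.conj : S →* MulAut S) := by
  intro f
  obtain ⟨g, hg⟩ := exists_g f
  set f₁ : MulAut S := (MulAut.conj (inr g))⁻¹ * f with hf₁
  have hfix : ∀ v : V23, f₁ (inl v) = inl v := by
    intro v
    have h0 : f₁ (inl v) = (MulAut.conj (inr g))⁻¹ (f (inl v)) := rfl
    rw [h0, hg v, ← map_inv MulAut.conj, MulAut.conj_apply, ← map_inv inr,
      conj_inr_inl, aglPhi_inv_apply]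
  have tau_mem : ∀ x : S, x⁻¹ * f₁ x ∈ Vsub := by
    intro x
    have hcom : ∀ v : V23, (x⁻¹ * f₁ x) * inl v = inl v * (x⁻¹ * f₁ x) := by
      intro v
      have h1 : x * inl v * x⁻¹ ∈ Vsub := Vsub_normal.conj_mem _ ⟨v, rfl⟩ x
      have h2 : f₁ (x * inl v * x⁻¹) = x * inl v * x⁻¹ := by
        rw [eq_inl_of_mem h1, hfix]
      have h3 : f₁ (x * inl v * x⁻¹) = f₁ x * inl v * (f₁ x)⁻¹ := by
        rw [map_mul, map_mul, map_inv, hfix]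
      have h4 : x * inl v * x⁻¹ = f₁ x * inl v * (f₁ x)⁻¹ := by rw [← h2, h3]
      have h5 := congrArg (fun z : S => x⁻¹ * z * f₁ x) h4
      simpa [mul_assoc] using h5.symm
    have he := eq_inl_of_commute hcom
    rw [he]; exact ⟨_, rfl⟩
  -- the element W
  set z : GL23 := -1 with hz
  set W : S := (inr z)⁻¹ * f₁ (inr z) with hWdef
  have hWmem : W ∈ Vsub := tau_mem (inr z)
  set wv : V23 := W.left with hwv
  have hW : W = inl wv := eq_inl_of_mem hWmem
  have hf₁z : f₁ (inr z) = inr z * inl wv := by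
    rw [← hW, hWdef, mul_inv_cancel_left]
  have key : ∀ h : GL23, f₁ (inr h) = inl wv * inr h * (inl wv)⁻¹ := by
    intro h
    set p : S := (inr h)⁻¹ * f₁ (inr h) with hpdef
    have hpmem : p ∈ Vsub := tau_mem (inr h)
    set pv : V23 := p.left with hpv
    have hp : p = inl pv := eq_inl_of_mem hpmem
    have hf₁h : f₁ (inr h) = inr h * inl pv := by
      rw [← hp, hpdef, mul_inv_cancel_left]
    -- the commuting relation
    have hzg : h * z = z * h := by rw [hz, mul_neg_one, neg_one_mul]
    have hE : f₁ (inr h) * f₁ (inr z) = f₁ (inr z) * f₁ (inr h) := by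
      rw [← map_mul f₁, ← map_mul inr, hzg, map_mul inr, map_mul f₁]
    rw [hf₁h, hf₁z] at hE
    -- normalize both sides to inl * inr form
    have hL : (inr h : S) * inl pv * (inr z * inl wv)
        = inl (aglPhi h pv * aglPhi h (aglPhi z wv)) * (inr h * inr z) := by
      rw [map_mul inl]
      calc (inr h : S) * inl pv * (inr z * inl wv)
          = inl (aglPhi h pv) * inr h * (inl (aglPhi z wv) * inr z) := by
            rw [inr_mul_inl, inr_mul_inl]
        _ = inl (aglPhi h pv) * (inr h * inl (aglPhi z wv)) * inr z := by
            rw [mul_assoc, mul_assoc, mul_assoc]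
        _ = inl (aglPhi h pv) * (inl (aglPhi h (aglPhi z wv)) * inr h) * inr z := by
            rw [inr_mul_inl]
        _ = inl (aglPhi h pv) * inl (aglPhi h (aglPhi z wv)) * (inr h * inr z) := by
            rw [mul_assoc, mul_assoc, mul_assoc]
    have hR : (inr z : S) * inl wv * (inr h * inl pv)
        = inl (aglPhi z wv * aglPhi z (aglPhi h pv)) * (inr z * inr h) := by
      rw [map_mul inl]
      calc (inr z : S) * inl wv * (inr h * inl pv)
          = inl (aglPhi z wv) * inr z * (inl (aglPhi h pv) * inr h) := by
            rw [inr_mul_inl, inr_mul_inl]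
        _ = inl (aglPhi z wv) * (inr z * inl (aglPhi h pv)) * inr h := by
            rw [mul_assoc, mul_assoc, mul_assoc]
        _ = inl (aglPhi z wv) * (inl (aglPhi z (aglPhi h pv)) * inr z) * inr h := by
            rw [inr_mul_inl]
        _ = inl (aglPhi z wv) * inl (aglPhi z (aglPhi h pv)) * (inr z * inr h) := by
            rw [mul_assoc, mul_assoc, mul_assoc]
    rw [hL, hR, ← map_mul inr, ← map_mul inr, hzg] at hE
    have hEV : aglPhi h pv * aglPhi h (aglPhi z wv)
        = aglPhi z wv * aglPhi z (aglPhi h pv) := by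
      have := mul_right_cancel hE
      exact inl_injective this
    -- simplify with aglPhi z = inv
    rw [aglPhi_neg_one wv, aglPhi_neg_one (aglPhi h pv), map_inv] at hEV
    -- hEV : aglPhi h pv * (aglPhi h wv)⁻¹ = wv⁻¹ * (aglPhi h pv)⁻¹
    set q : V23 := aglPhi h pv with hq
    have hq2 : q * q = wv⁻¹ * aglPhi h wv := by
      have h6 := congrArg (fun t : V23 => t * q * (aglPhi h wv)) hEV
      calc q * q = q * (aglPhi h wv)⁻¹ * q * aglPhi h wv := by
            rw [mul_assoc, mul_assoc, mul_comm q (aglPhi h wv), inv_mul_cancel_left]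
        _ = wv⁻¹ * q⁻¹ * q * aglPhi h wv := by rw [h6]
        _ = wv⁻¹ * aglPhi h wv := by
            rw [mul_assoc wv⁻¹ q⁻¹ q, inv_mul_cancel, mul_one]
    have hq3 : q * (q * q) = 1 := by
      have := v23_cube q; rwa [mul_assoc] at this
    have hqval : q = wv * (aglPhi h wv)⁻¹ := by
      have hinv : q⁻¹ = q * q := inv_eq_of_mul_eq_one_right hq3
      have : q = (q * q)⁻¹ := by rw [← hinv, inv_inv]
      rw [this, hq2, mul_inv, inv_inv, mul_comm]
    -- conclude
    have final : (inl wv : S) * inr h * (inl wv)⁻¹ = f₁ (inr h) := by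
      calc (inl wv : S) * inr h * (inl wv)⁻¹
          = inl wv * inr h * inl wv⁻¹ := by rw [map_inv]
        _ = inl wv * (inl (aglPhi h wv⁻¹) * inr h) := by rw [mul_assoc, inr_mul_inl]
        _ = inl (wv * aglPhi h wv⁻¹) * inr h := by rw [map_mul inl, mul_assoc]
        _ = inl q * inr h := by rw [map_inv, ← hqval]
        _ = inr h * inl pv := by rw [hq, inr_mul_inl]
        _ = f₁ (inr h) := hf₁h.symm
    exact final.symm
  have hconj : ∀ x : S, f₁ x = inl wv * x * (inl wv)⁻¹ := by
    intro x
    have hc : (inl x.left : S) * inl wv = inl wv * inl x.left := by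
      rw [← map_mul, ← map_mul, mul_comm]
    calc f₁ x = f₁ (inl x.left * inr x.right) := by rw [inl_left_mul_inr_right]
      _ = inl x.left * f₁ (inr x.right) := by rw [map_mul, hfix]
      _ = inl x.left * (inl wv * inr x.right * (inl wv)⁻¹) := by rw [key]
      _ = inl x.left * inl wv * inr x.right * (inl wv)⁻¹ := by
          rw [← mul_assoc, ← mul_assoc]
      _ = inl wv * inl x.left * inr x.right * (inl wv)⁻¹ := by rw [hc]
      _ = inl wv * (inl x.left * inr x.right) * (inl wv)⁻¹ := by
          rw [mul_assoc (inl wv)]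
      _ = inl wv * x * (inl wv)⁻¹ := by rw [inl_left_mul_inr_right]
  have hf₁conj : f₁ = MulAut.conj (inl wv) :=
    MulEquiv.ext fun x => by rw [MulAut.conj_apply, hconj]
  refine ⟨inr g * inl wv, ?_⟩
  rw [map_mul, ← hf₁conj, hf₁, mul_inv_cancel_left]

lemma conj_inj : Function.Injective ⇑(MulAut.conj : S →* MulAut S) := by
  refine (injective_iff_map_eq_one _).mpr ?_
  intro x hx
  have hcom : ∀ y : S, x * y = y * x := by
    intro y
    have h1 : MulAut.conj x y = (1 : MulAut S) y := by rw [hx]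
    rw [MulAut.conj_apply, MulAut.one_apply] at h1
    calc x * y = x * y * x⁻¹ * x := by group
      _ = y * x := by rw [h1]
  have hxl := eq_inl_of_commute (fun v => hcom (inl v))
  set u := x.left with hu
  have h2 := hcom (inr (-1 : GL23))
  rw [hxl, inr_mul_inl, aglPhi_neg_one] at h2
  have h3 : u = u⁻¹ := inl_injective (mul_right_cancel h2)
  have h4 : u * u = 1 := by nth_rewrite 2 [h3]; exact mul_inv_cancel u
  have h5 := v23_cube u
  rw [h4, one_mul] at h5
  rw [hxl, h5, map_one]


/-- Every automorphism of `X = AGL₂(3)` is inner; since `Z(X) = 1` the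
conjugation map `X → Aut(X)` is in fact bijective, so `Aut(X) = Inn(X) ≅ X`. -/
theorem stmt11 :
    Function.Bijective ⇑(MulAut.conj : AGL23 →* MulAut AGL23) := by
  exact ⟨conj_inj, conj_surj⟩
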